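/- arXiv:2202.07569 — 10 statements merged into one kernel-verified Lean document; each statement's English description precedes it below -/
import Mathlib

section
/- Let R be a commutative ring in which k! is invertible, and let x, y : Fin m → R be vectors with all entries in {0,1}, each having exactly k entries equal to 1. Set k' = ∑_{i ∈ Fin m} x i · y i and e = (k!)⁻¹ · ∏_{i=0}^{k-1} (k' − i), where natural numbers are coerced into R. Then e = 1 if x = y and e = 0 otherwise (the arithmetic constant-weight equality operator is an equality operator). -/
/-- **Arithmetic constant-weight equality operator.** Let `R` be a commutative ring in which
`k!` is invertible, and `x y : Fin m → R` vectors with all entries in `{0,1}`, each having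
exactly `k` entries equal to `1`. With `k' = ∑ i, x i * y i` and
`e = (k!)⁻¹ * ∏_{i=0}^{k-1} (k' - i)`, we have `e = 1` if `x = y` and `e = 0` otherwise. -/
theorem arithmetic_constant_weight_equality_operator
    {R : Type*} [CommRing R] [DecidableEq R]
    {m k : ℕ} (x y : Fin m → R)
    (hfac : IsUnit ((k.factorial : R)))
    (hx01 : ∀ i, x i = 0 ∨ x i = 1) (hy01 : ∀ i, y i = 0 ∨ y i = 1)
    (hxk : (Finset.univ.filter (fun i => x i = 1)).card = k)
    (hyk : (Finset.univ.filter (fun i => y i = 1)).card = k) :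
    Ring.inverse ((k.factorial : R)) *
      (∏ i ∈ Finset.range k, ((∑ j : Fin m, x j * y j) - (i : R))) =
    if x = y then 1 else 0 := by
  classical
  set A := Finset.univ.filter (fun i : Fin m => x i = 1) with hA
  set B := Finset.univ.filter (fun i : Fin m => y i = 1) with hB
  have hsum : (∑ j : Fin m, x j * y j) = ((A ∩ B).card : R) := by
    have h1 : ∀ j : Fin m, x j * y j = if x j = 1 ∧ y j = 1 then (1 : R) else 0 := by
      intro j
      by_cases hc : x j = 1 ∧ y j = 1
      · rw [if_pos hc, hc.1, hc.2, mul_one]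
      · rw [if_neg hc]
        rcases hx01 j with h | h
        · rw [h, zero_mul]
        · have h' : y j = 0 := (hy01 j).resolve_right (fun h' => hc ⟨h, h'⟩)
          rw [h', mul_zero]
    rw [Finset.sum_congr rfl (fun j _ => h1 j), Finset.sum_boole]
    congr 1
    rw [hA, hB, ← Finset.filter_and]
  rw [hsum]
  by_cases hxy : x = y
  · subst hxy
    rw [if_pos rfl]
    have hAB : A ∩ B = A := by rw [hA, hB, Finset.inter_self]
    rw [hAB, hxk]
    have hprod : (∏ i ∈ Finset.range k, ((k : R) - (i : R))) = (k.factorial : R) := by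
      have : ∀ i ∈ Finset.range k, ((k : R) - (i : R)) = ((k - i : ℕ) : R) := by
        intro i hi
        rw [Nat.cast_sub (le_of_lt (Finset.mem_range.mp hi))]
      rw [Finset.prod_congr rfl this, ← Nat.cast_prod,
        ← Nat.descFactorial_eq_prod_range, Nat.descFactorial_self]
    rw [hprod, Ring.inverse_mul_cancel _ hfac]
  · rw [if_neg hxy]
    have hsub : A ∩ B ⊆ A := Finset.inter_subset_left
    have hlt : (A ∩ B).card < k := by
      rcases lt_or_eq_of_le (le_trans (Finset.card_le_card hsub) (le_of_eq hxk)) with h | h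
      · exact h
      · exfalso
        have hABA : A ∩ B = A := Finset.eq_of_subset_of_card_le hsub (by rw [h, hxk])
        have hAsubB : A ⊆ B := by
          intro i hi
          have : i ∈ A ∩ B := hABA.symm ▸ hi
          exact Finset.mem_of_mem_inter_right this
        have hABeq : A = B :=
          Finset.eq_of_subset_of_card_le hAsubB (by rw [hxk, hyk])
        apply hxy
        funext i
        by_cases hxi : x i = 1
        · have : i ∈ B := hABeq ▸ (by simp [hA, hxi])
          rw [hB, Finset.mem_filter] at this
          rw [hxi, this.2]
        · have hx0 : x i = 0 := (hx01 i).resolve_right hxi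
          have : i ∉ B := by
            rw [← hABeq]; simp [hA, hxi]
          simp only [hB, Finset.mem_filter, Finset.mem_univ, true_and] at this
          have hy0 : y i = 0 := (hy01 i).resolve_right this
          rw [hx0, hy0]
    rw [Finset.prod_eq_zero (Finset.mem_range.mpr hlt) (sub_self (((A ∩ B).card : ℕ) : R)), mul_zero]
end

section
/- Let R be a nontrivial commutative ring, and let E : Fin n → (Fin m → R) be an injective map such that for every i, the vector E i has all entries in {0,1} and exactly k entries equal to 1. Then for every database DB : Fin n → R and every query index q : Fin n, ∑_{i ∈ Fin n} (∏_{j : (E i) j = 1} (E q) j) · DB i = DB q. -/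
/-- **Correctness of constant-weight PIR.** Let `R` be a nontrivial commutative ring and
`E : Fin n → (Fin m → R)` an injective encoding into constant-weight codewords (entries in
`{0,1}`, exactly `k` ones). Then for every database `DB : Fin n → R` and query `q`,
`∑ i, (∏_{j : (E i) j = 1} (E q) j) * DB i = DB q`. -/
theorem constant_weight_pir_correct
    {R : Type*} [CommRing R] [Nontrivial R] [DecidableEq R]
    {n m k : ℕ} (E : Fin n → (Fin m → R)) (hE : Function.Injective E)
    (h01 : ∀ i j, E i j = 0 ∨ E i j = 1)
    (hwt : ∀ i, (Finset.univ.filter (fun j => E i j = 1)).card = k)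
    (DB : Fin n → R) (q : Fin n) :
    (∑ i : Fin n, (∏ j ∈ Finset.univ.filter (fun j => E i j = 1), E q j) * DB i) = DB q := by
  have key : ∀ i : Fin n, i ≠ q →
      (∏ j ∈ Finset.univ.filter (fun j => E i j = 1), E q j) = 0 := by
    intro i hi
    -- supports differ
    have hsupp : (Finset.univ.filter (fun j => E i j = 1)) ≠
        (Finset.univ.filter (fun j => E q j = 1)) := by
      intro h
      apply hi
      apply hE
      funext j
      rcases h01 i j with h1 | h1 <;> rcases h01 q j with h2 | h2 <;> try simp [h1, h2]
      · -- E i j = 0, E q j = 1 : contradiction via h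
        have : j ∈ Finset.univ.filter (fun j => E q j = 1) := by simp [h2]
        rw [← h] at this
        simp [h1] at this
      · have : j ∈ Finset.univ.filter (fun j => E i j = 1) := by simp [h1]
        rw [h] at this
        simp [h2] at this
    -- not a subset (equal cardinalities)
    have hns : ¬ (Finset.univ.filter (fun j => E i j = 1)) ⊆
        (Finset.univ.filter (fun j => E q j = 1)) := by
      intro hsub
      exact hsupp (Finset.eq_of_subset_of_card_le hsub (by rw [hwt, hwt]))
    obtain ⟨j, hj, hj2⟩ := Finset.not_subset.mp hns
    have hq0 : E q j = 0 := by
      rcases h01 q j with h | h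
      · exact h
      · exact absurd (by simp [h]) hj2
    exact Finset.prod_eq_zero hj hq0
  rw [Finset.sum_eq_single q]
  · rw [Finset.prod_eq_one (fun j hj => by simpa using hj), one_mul]
  · intro i _ hi; rw [key i hi, zero_mul]
  · intro h; exact absurd (Finset.mem_univ q) h
end

section
/- Let R be a nontrivial commutative ring, S a type of identifiers, and E : S → (Fin m → R) an injective map such that for every s ∈ S the vector E s has all entries in {0,1} and exactly k entries equal to 1. Let ID be a finite set of identifiers (a Finset of S) and DB : S → R. Then for every query q ∈ S, ∑_{id ∈ ID} (∏_{j : (E id) j = 1} (E q) j) · DB id equals DB q if q ∈ ID, and equals 0 if q ∉ ID (correctness of constant-weight keyword PIR over a sparse database). -/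
/-- **Correctness of constant-weight keyword PIR over a sparse database.** Let `R` be a
nontrivial commutative ring, `S` a type of identifiers, and `E : S → (Fin m → R)` an
injective encoding into constant-weight codewords (entries in `{0,1}`, exactly `k` ones).
Let `ID : Finset S` and `DB : S → R`. Then for every query `q : S`,
`∑_{id ∈ ID} (∏_{j : (E id) j = 1} (E q) j) * DB id` equals `DB q` if `q ∈ ID` and `0`
otherwise. -/
theorem constant_weight_keyword_pir_correct
    {R : Type*} [CommRing R] [Nontrivial R] [DecidableEq R]
    {S : Type*} [DecidableEq S] {m k : ℕ} (E : S → (Fin m → R)) (hE : Function.Injective E)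
    (h01 : ∀ s j, E s j = 0 ∨ E s j = 1)
    (hwt : ∀ s, (Finset.univ.filter (fun j => E s j = 1)).card = k)
    (ID : Finset S) (DB : S → R) (q : S) :
    (∑ id ∈ ID, (∏ j ∈ Finset.univ.filter (fun j => E id j = 1), E q j) * DB id) =
      if q ∈ ID then DB q else 0 := by
  have key : ∀ id : S, (∏ j ∈ Finset.univ.filter (fun j => E id j = 1), E q j) =
      if id = q then 1 else 0 := by
    intro id
    by_cases h : id = q
    · subst h
      simp only [if_pos rfl]
      exact Finset.prod_eq_one (fun j hj => (Finset.mem_filter.mp hj).2)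
    · simp only [if_neg h]
      -- find j with E id j = 1 and E q j = 0
      have hne : ¬ (Finset.univ.filter (fun j => E id j = 1)) ⊆
          (Finset.univ.filter (fun j => E q j = 1)) := by
        intro hsub
        have heq : (Finset.univ.filter (fun j => E id j = 1)) =
            (Finset.univ.filter (fun j => E q j = 1)) :=
          Finset.eq_of_subset_of_card_le hsub (by rw [hwt, hwt])
        apply h
        apply hE
        funext j
        rcases h01 id j with h1 | h1 <;> rcases h01 q j with h2 | h2 <;> rw [h1, h2]
        · exfalso
          have : j ∈ (Finset.univ.filter (fun j => E q j = 1)) := by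
            simp [h2]
          rw [← heq] at this
          rw [(Finset.mem_filter.mp this).2] at h1
          exact one_ne_zero h1
        · exfalso
          have : j ∈ (Finset.univ.filter (fun j => E id j = 1)) := by
            simp [h1]
          rw [heq] at this
          rw [(Finset.mem_filter.mp this).2] at h2
          exact one_ne_zero h2
      rw [Finset.not_subset] at hne
      obtain ⟨j, hj1, hj2⟩ := hne
      apply Finset.prod_eq_zero hj1
      rcases h01 q j with h2 | h2
      · exact h2
      · exact absurd (Finset.mem_filter.mpr ⟨Finset.mem_univ j, h2⟩) hj2
  simp only [key]
  by_cases hq : q ∈ ID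
  · rw [if_pos hq]
    simp only [ite_mul, one_mul, zero_mul]
    rw [Finset.sum_ite_eq' ID q DB, if_pos hq]
  · rw [if_neg hq]
    apply Finset.sum_eq_zero
    intro id hid
    rw [if_neg (by rintro rfl; exact hq hid), zero_mul]
end

section
/- Let R be a nontrivial commutative ring, and let E : Fin n → (Fin ℓ → R) be an injective map such that for every i the vector E i has all entries in {0,1}. Then for every database DB : Fin n → R and every query index q : Fin n, ∑_{i ∈ Fin n} ((∏_{j : (E i) j = 0} (1 − (E q) j)) · (∏_{j : (E i) j = 1} (E q) j)) · DB i = DB q (correctness of folklore PIR). -/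
/-- **Correctness of folklore PIR.** Let `R` be a nontrivial commutative ring and
`E : Fin n → (Fin ℓ → R)` an injective encoding into Boolean vectors (entries in `{0,1}`).
Then for every database `DB : Fin n → R` and query `q`,
`∑ i, ((∏_{j : (E i) j = 0} (1 - (E q) j)) * (∏_{j : (E i) j = 1} (E q) j)) * DB i = DB q`. -/
theorem folklore_pir_correct
    {R : Type*} [CommRing R] [Nontrivial R] [DecidableEq R]
    {n ℓ : ℕ} (E : Fin n → (Fin ℓ → R)) (hE : Function.Injective E)
    (h01 : ∀ i j, E i j = 0 ∨ E i j = 1)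
    (DB : Fin n → R) (q : Fin n) :
    (∑ i : Fin n,
        ((∏ j ∈ Finset.univ.filter (fun j => E i j = 0), (1 - E q j)) *
          (∏ j ∈ Finset.univ.filter (fun j => E i j = 1), E q j)) * DB i) = DB q := by
  rw [Finset.sum_eq_single q]
  · have h1 : (∏ j ∈ Finset.univ.filter (fun j => E q j = 0), (1 - E q j)) = 1 := by
      apply Finset.prod_eq_one; intro j hj
      simp only [Finset.mem_filter] at hj
      rw [hj.2]; ring
    have h2 : (∏ j ∈ Finset.univ.filter (fun j => E q j = 1), E q j) = 1 := by
      apply Finset.prod_eq_one; intro j hj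
      simp only [Finset.mem_filter] at hj
      rw [hj.2]
    rw [h1, h2]; ring
  · intro i _ hiq
    have hne : E i ≠ E q := fun h => hiq (hE h)
    obtain ⟨j, hj⟩ := Function.ne_iff.mp hne
    rcases h01 i j with h0 | h1
    · have hq1 : E q j = 1 := by
        rcases h01 q j with h | h
        · exact absurd (h0.trans h.symm) hj
        · exact h
      have hz : (∏ j ∈ Finset.univ.filter (fun j => E i j = 0), (1 - E q j)) = 0 := by
        apply Finset.prod_eq_zero (Finset.mem_filter.mpr ⟨Finset.mem_univ j, h0⟩)
        rw [hq1]; ring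
      rw [hz]; ring
    · have hq0 : E q j = 0 := by
        rcases h01 q j with h | h
        · exact h
        · exact absurd (h1.trans h.symm) hj
      have hz : (∏ j ∈ Finset.univ.filter (fun j => E i j = 1), E q j) = 0 :=
        Finset.prod_eq_zero (Finset.mem_filter.mpr ⟨Finset.mem_univ j, h1⟩) hq0
      rw [hz]; ring
  · intro h; exact absurd (Finset.mem_univ q) h
end

section
/- Let k ≥ 1 and m ≥ k be natural numbers, and let x be a natural number with x < C(m,k). Let c be the largest natural number satisfying C(c,k) ≤ x (such c exists). Then c < m and x − C(c,k) < C(c, k−1). -/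
/-- **Greedy-choice property of the perfect mapping.** Let `k ≥ 1`, `m ≥ k`, and
`x < C(m,k)`. There exists a largest natural number `c` with `C(c,k) ≤ x`, and for it
`c < m` and `x - C(c,k) < C(c, k-1)`. -/
theorem perfect_mapping_greedy_step (k m x : ℕ) (hk : 1 ≤ k) (hkm : k ≤ m)
    (hx : x < Nat.choose m k) :
    ∃ c : ℕ, (Nat.choose c k ≤ x ∧ ∀ d : ℕ, Nat.choose d k ≤ x → d ≤ c) ∧
      c < m ∧ x - Nat.choose c k < Nat.choose c (k - 1) := by
  have hlt : ∀ d : ℕ, Nat.choose d k ≤ x → d < m := by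
    intro d hd
    by_contra h
    push_neg at h
    exact absurd (Nat.choose_le_choose k h) (by omega)
  set c := Nat.findGreatest (fun d => Nat.choose d k ≤ x) m with hc
  have hP0 : Nat.choose 0 k ≤ x := by
    simp [Nat.choose_eq_zero_of_lt hk]
  have hPc : Nat.choose c k ≤ x := Nat.findGreatest_spec (P := fun d => Nat.choose d k ≤ x) (Nat.zero_le m) hP0
  have hmax : ∀ d : ℕ, Nat.choose d k ≤ x → d ≤ c := by
    intro d hd
    by_contra h
    push_neg at h
    exact Nat.findGreatest_is_greatest h (le_of_lt (hlt d hd)) hd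
  have hcm : c < m := hlt c hPc
  refine ⟨c, ⟨hPc, hmax⟩, hcm, ?_⟩
  have hsucc : ¬ Nat.choose (c + 1) k ≤ x :=
    Nat.findGreatest_is_greatest (P := fun d => Nat.choose d k ≤ x) (Nat.lt_succ_self c) (by omega)
  have hpascal : Nat.choose (c + 1) k = Nat.choose c (k - 1) + Nat.choose c k := by
    have : k = (k - 1) + 1 := by omega
    rw [this, Nat.choose_succ_succ]; simp
  omega
end

section
/- Let k ≥ 1 and let c_1 < c_2 < ... < c_k and d_1 < d_2 < ... < d_k be two strictly increasing sequences of natural numbers. Then ∑_{i=1}^{k} C(c_i, i) < ∑_{i=1}^{k} C(d_i, i) if and only if (c_1,...,c_k) strictly precedes (d_1,...,d_k) in colexicographic order (i.e., the sequences differ and at the largest index i where c_i ≠ d_i one has c_i < d_i). In particular, the perfect mapping preserves the order between the mapped elements. -/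
open Finset

private lemma hockey (e : ℕ → ℕ) (he : StrictMono e) (n : ℕ) :
    ∑ i ∈ Finset.range (n+1), (e i).choose (i+1) < (e n + 1).choose (n+1) := by
  induction n with
  | zero => simp
  | succ n ih =>
    rw [Finset.sum_range_succ]
    have h1 : e n + 1 ≤ e (n+1) := he (Nat.lt_succ_self n)
    calc ∑ i ∈ Finset.range (n+1), (e i).choose (i+1) + (e (n+1)).choose (n+2)
        < (e n + 1).choose (n+1) + (e (n+1)).choose (n+2) :=
          Nat.add_lt_add_right ih _
      _ ≤ (e (n+1)).choose (n+1) + (e (n+1)).choose (n+2) :=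
          Nat.add_le_add_right (Nat.choose_le_choose _ h1) _
      _ = (e (n+1) + 1).choose (n+2) := (Nat.choose_succ_succ _ _).symm

private lemma sum_lt_aux (e f : ℕ → ℕ) (he : StrictMono e) (k j : ℕ) (hjk : j < k)
    (hj : e j < f j) (heq : ∀ i, j < i → i < k → e i = f i) :
    ∑ i ∈ Finset.range k, (e i).choose (i+1) < ∑ i ∈ Finset.range k, (f i).choose (i+1) := by
  have hsplit : ∀ g : ℕ → ℕ, ∑ i ∈ Finset.range (j+1), g i + ∑ i ∈ Finset.Ico (j+1) k, g i
      = ∑ i ∈ Finset.range k, g i := fun g => Finset.sum_range_add_sum_Ico g hjk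
  rw [← hsplit, ← hsplit]
  have h2 : ∑ i ∈ Finset.Ico (j+1) k, (e i).choose (i+1)
      = ∑ i ∈ Finset.Ico (j+1) k, (f i).choose (i+1) := by
    refine Finset.sum_congr rfl fun i hi => ?_
    rw [Finset.mem_Ico] at hi
    rw [heq i (by omega) hi.2]
  rw [h2]
  have h3 : ∑ i ∈ Finset.range (j+1), (e i).choose (i+1) < (f j).choose (j+1) :=
    lt_of_lt_of_le (hockey e he j) (Nat.choose_le_choose _ hj)
  have h4 : (f j).choose (j+1) ≤ ∑ i ∈ Finset.range (j+1), (f i).choose (i+1) :=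
    Finset.single_le_sum (f := fun i => (f i).choose (i+1)) (fun i _ => Nat.zero_le _) (Finset.self_mem_range_succ j)
  omega

private lemma colex_sum_lt (k : ℕ) (c d : Fin k → ℕ) (hc : StrictMono c) (j : Fin k)
    (hj : c j < d j) (heq : ∀ i : Fin k, j < i → c i = d i) :
    ∑ i : Fin k, (c i).choose (i.val + 1) < ∑ i : Fin k, (d i).choose (i.val + 1) := by
  have hk : 1 ≤ k := j.pos
  set E : ℕ → ℕ := fun n => c ⟨min n (k-1), by omega⟩ + (n - (k-1)) with hEdef
  set F : ℕ → ℕ := fun n => d ⟨min n (k-1), by omega⟩ + (n - (k-1)) with hFdef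
  have hEc : ∀ i : Fin k, E i.val = c i := by
    intro i
    have hlt := i.isLt
    have h1 : (⟨min i.val (k-1), by omega⟩ : Fin k) = i := Fin.ext (by simp; omega)
    simp only [hEdef, h1]
    omega
  have hFd : ∀ i : Fin k, F i.val = d i := by
    intro i
    have hlt := i.isLt
    have h1 : (⟨min i.val (k-1), by omega⟩ : Fin k) = i := Fin.ext (by simp; omega)
    simp only [hFdef, h1]
    omega
  have hE : StrictMono E := by
    apply strictMono_nat_of_lt_succ
    intro n
    rcases lt_or_ge n (k-1) with h | h
    · have h1 : min n (k-1) = n := by omega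
      have h2 : min (n+1) (k-1) = n+1 := by omega
      simp only [hEdef]
      have h3 : (⟨min n (k-1), by omega⟩ : Fin k) < ⟨min (n+1) (k-1), by omega⟩ := by
        simp [Fin.lt_def]; omega
      have := hc h3
      omega
    · have h1 : min n (k-1) = k-1 := by omega
      have h2 : min (n+1) (k-1) = k-1 := by omega
      simp only [hEdef, h1, h2]
      omega
  have hsumE : ∑ i : Fin k, (c i).choose (i.val + 1)
      = ∑ i ∈ Finset.range k, (E i).choose (i+1) := by
    rw [← Fin.sum_univ_eq_sum_range (fun n => (E n).choose (n+1)) k]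
    exact Finset.sum_congr rfl fun i _ => by rw [hEc i]
  have hsumF : ∑ i : Fin k, (d i).choose (i.val + 1)
      = ∑ i ∈ Finset.range k, (F i).choose (i+1) := by
    rw [← Fin.sum_univ_eq_sum_range (fun n => (F n).choose (n+1)) k]
    exact Finset.sum_congr rfl fun i _ => by rw [hFd i]
  rw [hsumE, hsumF]
  apply sum_lt_aux E F hE k j.val j.isLt
  · rw [hEc j, hFd j]; exact hj
  · intro i hji hik
    have := heq ⟨i, hik⟩ (by simp [Fin.lt_def]; omega)
    rw [show i = (⟨i, hik⟩ : Fin k).val from rfl, hEc, hFd]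
    exact this

/-- **The perfect mapping is order preserving (colexicographic order).** Let `k ≥ 1` and
`c, d : Fin k → ℕ` strictly increasing. Then `∑_i C(c_i, i) < ∑_i C(d_i, i)` iff
`c` strictly precedes `d` in colexicographic order, i.e. there is an index `j` with
`c j < d j` and `c i = d i` for all `i > j`. -/
theorem perfect_mapping_colex_order (k : ℕ) (hk : 1 ≤ k) (c d : Fin k → ℕ)
    (hc : StrictMono c) (hd : StrictMono d) :
    ((∑ i : Fin k, Nat.choose (c i) (i.val + 1)) <
        ∑ i : Fin k, Nat.choose (d i) (i.val + 1)) ↔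
      ∃ j : Fin k, c j < d j ∧ ∀ i : Fin k, j < i → c i = d i := by
  have tri : (∃ j : Fin k, c j < d j ∧ ∀ i : Fin k, j < i → c i = d i) ∨
      (∃ j : Fin k, d j < c j ∧ ∀ i : Fin k, j < i → d i = c i) ∨ c = d := by
    by_cases h : c = d
    · right; right; exact h
    · have hS : (Finset.univ.filter fun i => c i ≠ d i).Nonempty := by
        by_contra h'
        apply h
        funext i
        by_contra hne
        exact h' ⟨i, Finset.mem_filter.mpr ⟨Finset.mem_univ _, hne⟩⟩
      set j := (Finset.univ.filter fun i => c i ≠ d i).max' hS with hjdef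
      have hjmem := (Finset.univ.filter fun i => c i ≠ d i).max'_mem hS
      have hjne : c j ≠ d j := (Finset.mem_filter.mp hjmem).2
      have heq : ∀ i : Fin k, j < i → c i = d i := by
        intro i hi
        by_contra hne
        exact absurd (Finset.le_max' _ i (Finset.mem_filter.mpr ⟨Finset.mem_univ _, hne⟩))
          (not_le.mpr hi)
      rcases lt_or_gt_of_ne hjne with h' | h'
      · left; exact ⟨j, h', heq⟩
      · right; left; exact ⟨j, h', fun i hi => (heq i hi).symm⟩
  constructor
  · intro hlt
    rcases tri with h | h | h
    · exact h
    · obtain ⟨j, hj, heq⟩ := h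
      have := colex_sum_lt k d c hd j hj heq
      omega
    · rw [h] at hlt
      omega
  · rintro ⟨j, hj, heq⟩
    exact colex_sum_lt k c d hc j hj heq
end

section
/- Let t ≥ 2, let N be a power of two, and let 0 ≤ a with 2^{a+1} dividing N. Set s = N/2^a + 1 (an odd number) and let σ_s be the ring endomorphism of R = (ZMod t)[X]/(X^N + 1) induced by X ↦ X^s. Then for every p ∈ R, σ_s(X^{2^a} · p) = − X^{2^a} · σ_s(p). -/
open Polynomial

/-- **Key identity for the modified oblivious expansion.** Let `t ≥ 2`, `N` a power of two,
`2^(a+1) ∣ N`, `s = N/2^a + 1`, and `σ_s` the substitution endomorphism `X ↦ X^s` of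
`R = (ZMod t)[X]/(X^N + 1)`. Then `σ_s (X^(2^a) * p) = - X^(2^a) * σ_s p` for all `p ∈ R`. -/
theorem substitution_monomial_shift (t N a : ℕ) (ht : 2 ≤ t)
    (hN : ∃ e : ℕ, N = 2 ^ e) (ha : 2 ^ (a + 1) ∣ N)
    (σ : ((ZMod t)[X] ⧸ Ideal.span {(X ^ N + 1 : (ZMod t)[X])}) →+*
      ((ZMod t)[X] ⧸ Ideal.span {(X ^ N + 1 : (ZMod t)[X])}))
    (hσ : ∀ p : (ZMod t)[X],
      σ (Ideal.Quotient.mk (Ideal.span {(X ^ N + 1 : (ZMod t)[X])}) p) =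
        Ideal.Quotient.mk (Ideal.span {(X ^ N + 1 : (ZMod t)[X])})
          (Polynomial.aeval (X ^ (N / 2 ^ a + 1) : (ZMod t)[X]) p)) :
    ∀ q : ((ZMod t)[X] ⧸ Ideal.span {(X ^ N + 1 : (ZMod t)[X])}),
      σ (Ideal.Quotient.mk (Ideal.span {(X ^ N + 1 : (ZMod t)[X])}) (X ^ (2 ^ a)) * q) =
        - (Ideal.Quotient.mk (Ideal.span {(X ^ N + 1 : (ZMod t)[X])}) (X ^ (2 ^ a)) * σ q) := by
  intro q
  obtain ⟨p, rfl⟩ := Ideal.Quotient.mk_surjective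
    (I := Ideal.span {(X ^ N + 1 : (ZMod t)[X])}) q
  have hdvd : 2 ^ a ∣ N := dvd_trans (pow_dvd_pow 2 (Nat.le_succ a)) ha
  have hmul : 2 ^ a * (N / 2 ^ a + 1) = N + 2 ^ a := by
    rw [Nat.mul_add, Nat.mul_div_cancel' hdvd, mul_one]
  have hXN : Ideal.Quotient.mk (Ideal.span {(X ^ N + 1 : (ZMod t)[X])})
      ((X : (ZMod t)[X]) ^ N) = -1 := by
    have h0 : Ideal.Quotient.mk (Ideal.span {(X ^ N + 1 : (ZMod t)[X])})
        (X ^ N + 1 : (ZMod t)[X]) = 0 :=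
      Ideal.Quotient.eq_zero_iff_mem.mpr (Ideal.subset_span rfl)
    rw [map_add, map_one] at h0
    linear_combination h0
  have key : Ideal.Quotient.mk (Ideal.span {(X ^ N + 1 : (ZMod t)[X])})
      ((Polynomial.aeval (X ^ (N / 2 ^ a + 1) : (ZMod t)[X]))
        ((X : (ZMod t)[X]) ^ (2 ^ a))) =
      - Ideal.Quotient.mk (Ideal.span {(X ^ N + 1 : (ZMod t)[X])})
        ((X : (ZMod t)[X]) ^ (2 ^ a)) := by
    have h1 : (Polynomial.aeval (X ^ (N / 2 ^ a + 1) : (ZMod t)[X]))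
        ((X : (ZMod t)[X]) ^ (2 ^ a)) =
        ((X : (ZMod t)[X]) ^ (N / 2 ^ a + 1)) ^ (2 ^ a) := by
      simp
    rw [h1, ← pow_mul, mul_comm, hmul, pow_add, map_mul, hXN]
    ring
  rw [← map_mul, hσ, map_mul, map_mul, key, hσ]
  ring
end

section
/- Let t ≥ 2, let N be a power of two, let 0 ≤ a with 2^{a+1} dividing N, set s = N/2^a + 1, and let σ_s be the ring endomorphism of R = (ZMod t)[X]/(X^N + 1) induced by X ↦ X^s. Then for every natural number j < N: if 2^{a+1} divides j then σ_s(X^j) = X^j, and if j ≡ 2^a (mod 2^{a+1}) then σ_s(X^j) = − X^j. -/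
open Polynomial

/-- **Action of substitution on monomials.** Let `t ≥ 2`, `N` a power of two,
`2^(a+1) ∣ N`, `s = N/2^a + 1`, and `σ_s` the substitution endomorphism `X ↦ X^s` of
`R = (ZMod t)[X]/(X^N + 1)`. For every `j < N`: if `2^(a+1) ∣ j` then `σ_s(X^j) = X^j`,
and if `j ≡ 2^a (mod 2^(a+1))` then `σ_s(X^j) = -X^j`. -/
theorem substitution_action_on_monomials (t N a : ℕ) (ht : 2 ≤ t)
    (hN : ∃ e : ℕ, N = 2 ^ e) (ha : 2 ^ (a + 1) ∣ N)
    (σ : ((ZMod t)[X] ⧸ Ideal.span {(X ^ N + 1 : (ZMod t)[X])}) →+*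
      ((ZMod t)[X] ⧸ Ideal.span {(X ^ N + 1 : (ZMod t)[X])}))
    (hσ : ∀ p : (ZMod t)[X],
      σ (Ideal.Quotient.mk (Ideal.span {(X ^ N + 1 : (ZMod t)[X])}) p) =
        Ideal.Quotient.mk (Ideal.span {(X ^ N + 1 : (ZMod t)[X])})
          (Polynomial.aeval (X ^ (N / 2 ^ a + 1) : (ZMod t)[X]) p)) :
    ∀ j : ℕ, j < N →
      (2 ^ (a + 1) ∣ j →
        σ (Ideal.Quotient.mk (Ideal.span {(X ^ N + 1 : (ZMod t)[X])}) (X ^ j)) =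
          Ideal.Quotient.mk (Ideal.span {(X ^ N + 1 : (ZMod t)[X])}) (X ^ j)) ∧
      (j % 2 ^ (a + 1) = 2 ^ a →
        σ (Ideal.Quotient.mk (Ideal.span {(X ^ N + 1 : (ZMod t)[X])}) (X ^ j)) =
          - Ideal.Quotient.mk (Ideal.span {(X ^ N + 1 : (ZMod t)[X])}) (X ^ j)) := by
  intro j _hj
  have hdvd : (2 : ℕ) ^ a ∣ N := dvd_trans (pow_dvd_pow 2 (Nat.le_succ a)) ha
  have hXN : (Ideal.Quotient.mk (Ideal.span {(X ^ N + 1 : (ZMod t)[X])})) (X ^ N : (ZMod t)[X]) = -1 := by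
    have h0 : (Ideal.Quotient.mk (Ideal.span {(X ^ N + 1 : (ZMod t)[X])})) (X ^ N + 1 : (ZMod t)[X]) = 0 :=
      Ideal.Quotient.eq_zero_iff_mem.mpr (Ideal.subset_span rfl)
    rw [map_add, map_one] at h0
    linear_combination h0
  have main : ∀ k : ℕ, j = 2 ^ a * k →
      σ (Ideal.Quotient.mk (Ideal.span {(X ^ N + 1 : (ZMod t)[X])}) (X ^ j)) = (-1) ^ k * Ideal.Quotient.mk (Ideal.span {(X ^ N + 1 : (ZMod t)[X])}) (X ^ j) := by
    intro k hk
    rw [hσ, map_pow, aeval_X, ← pow_mul]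
    have harith : (N / 2 ^ a + 1) * j = N * k + j := by
      have hc : N / 2 ^ a * 2 ^ a = N := Nat.div_mul_cancel hdvd
      calc (N / 2 ^ a + 1) * j = N / 2 ^ a * (2 ^ a * k) + j := by rw [← hk]; ring
        _ = N / 2 ^ a * 2 ^ a * k + j := by ring
        _ = N * k + j := by rw [hc]
    rw [harith, pow_add, pow_mul, map_mul, map_pow, hXN]
  constructor
  · intro h
    obtain ⟨m, hm⟩ := h
    have := main (2 * m) (by rw [hm]; ring)
    rw [this, pow_mul]
    norm_num
  · intro h
    have hj2 : j = 2 ^ a * (2 * (j / 2 ^ (a + 1)) + 1) := by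
      conv_lhs => rw [← Nat.div_add_mod j (2 ^ (a + 1)), h]
      ring
    have := main (2 * (j / 2 ^ (a + 1)) + 1) hj2
    rw [this, pow_add, pow_mul]
    norm_num
    ring
end

section
/- Let m ≥ 1 and 1 ≤ k ≤ m. Let Ω = ℕ → Fin m be equipped with the infinite product of the uniform probability measure on Fin m (an i.i.d. uniform sequence). Almost surely the sequence ω attains at least k distinct values; let S(ω) be the set of the first k pairwise-distinct values of ω (the set of values that have appeared by the first time at which k distinct values have occurred). Then for every k-element subset c of Fin m, the probability that S(ω) = c equals 1 / C(m,k); i.e., S is uniformly distributed over the k-element subsets of Fin m. -/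
open MeasureTheory ENNReal

/-- The set of the first `k` pairwise-distinct values of the sequence `ω`: the image of `ω`
on the first time interval at which `k` distinct values have occurred (junk value `∅` if
`k` distinct values never occur). -/
noncomputable def firstDistinct {m : ℕ} (k : ℕ) (ω : ℕ → Fin m) : Finset (Fin m) :=
  haveI := Classical.propDecidable (∃ n, k ≤ ((Finset.range n).image ω).card)
  if h : ∃ n, k ≤ ((Finset.range n).image ω).card then
    (Finset.range (Nat.find h)).image ω
  else ∅

namespace LossyAux

variable {m : ℕ}

/-- The cylinder of sequences with a prescribed length-`n` prefix. -/
def cyl (n : ℕ) (p : Fin n → Fin m) : Set (ℕ → Fin m) := {ω | ∀ i : Fin n, ω i = p i}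

lemma measurableSet_cyl (n : ℕ) (p : Fin n → Fin m) : MeasurableSet (cyl n p) := by
  have h : cyl n p = ⋂ i : Fin n, (fun ω : ℕ → Fin m => ω i) ⁻¹' {p i} := by
    ext ω; simp [cyl]
  rw [h]
  exact MeasurableSet.iInter fun i => (measurable_pi_apply _) (measurableSet_singleton _)

/-- The finite set of length-`n` prefixes satisfying a predicate `P`. -/
noncomputable def pset (n : ℕ) (P : (Fin n → Fin m) → Prop) : Finset (Fin n → Fin m) :=
  @Finset.filter _ P (Classical.decPred P) Finset.univ

lemma mem_pset {n : ℕ} {P : (Fin n → Fin m) → Prop} {p : Fin n → Fin m} :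
    p ∈ pset n P ↔ P p := by
  letI := Classical.decPred P
  constructor
  · intro h
    exact (Finset.mem_filter.1 h).2
  · intro h
    exact Finset.mem_filter.2 ⟨Finset.mem_univ _, h⟩

/-- The image of the first `j` values of a length-`n` prefix. -/
def pimg {n : ℕ} (p : Fin n → Fin m) (j : ℕ) : Finset (Fin m) :=
  (Finset.univ.filter (fun i : Fin n => (i : ℕ) < j)).image p

lemma pimg_eq (ω : ℕ → Fin m) {j n : ℕ} (hj : j ≤ n) :
    pimg (fun i : Fin n => ω i) j = (Finset.range j).image ω := by
  ext b
  simp only [pimg, Finset.mem_image, Finset.mem_filter, Finset.mem_univ, true_and,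
    Finset.mem_range]
  constructor
  · rintro ⟨i, hij, rfl⟩; exact ⟨i, hij, rfl⟩
  · rintro ⟨i, hij, rfl⟩; exact ⟨⟨i, lt_of_lt_of_le hij hj⟩, hij, rfl⟩

lemma pimg_top {n : ℕ} (p : Fin n → Fin m) : pimg p n = Finset.univ.image p := by
  unfold pimg
  congr 1
  apply Finset.filter_true_of_mem
  intro i _
  exact i.isLt

/-- The prefix predicate describing: the set of values seen in the first `n` steps
is `c`, and fewer than `k` distinct values were seen strictly before time `n`. -/
def Pred (k : ℕ) (n : ℕ) (c : Finset (Fin m)) (p : Fin n → Fin m) : Prop :=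
  pimg p n = c ∧ ∀ j < n, (pimg p j).card < k

/-- The event that `n` is the first time `k` distinct values have been seen and the
set of values seen is `c`. -/
def Fev (k n : ℕ) (c : Finset (Fin m)) : Set (ℕ → Fin m) :=
  {ω | Pred k n c (fun i : Fin n => ω i)}

lemma mem_Fev {k n : ℕ} {c : Finset (Fin m)} {ω : ℕ → Fin m} :
    ω ∈ Fev k n c ↔ (Finset.range n).image ω = c ∧
      ∀ j < n, ((Finset.range j).image ω).card < k := by
  unfold Fev Pred
  constructor
  · rintro ⟨h1, h2⟩
    rw [pimg_eq ω le_rfl] at h1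
    refine ⟨h1, fun j hj => ?_⟩
    have := h2 j hj
    rwa [pimg_eq ω hj.le] at this
  · rintro ⟨h1, h2⟩
    exact ⟨by rw [pimg_eq ω le_rfl]; exact h1,
      fun j hj => by rw [pimg_eq ω hj.le]; exact h2 j hj⟩

lemma event_eq (n : ℕ) (P : (Fin n → Fin m) → Prop) :
    {ω : ℕ → Fin m | P (fun i : Fin n => ω i)} = ⋃ p ∈ pset n P, cyl n p := by
  ext ω
  simp only [Set.mem_setOf_eq, Set.mem_iUnion, mem_pset]
  constructor
  · intro h
    exact ⟨fun i => ω i, h, fun i => rfl⟩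
  · rintro ⟨p, hp, he⟩
    have hpe : (fun i : Fin n => ω i) = p := funext he
    rwa [hpe]

lemma measurableSet_event (n : ℕ) (P : (Fin n → Fin m) → Prop) :
    MeasurableSet {ω : ℕ → Fin m | P (fun i : Fin n => ω i)} := by
  rw [event_eq]
  exact (pset n P).measurableSet_biUnion fun p _ => measurableSet_cyl n p

lemma fd_eq_iUnion {k : ℕ} (hk : 1 ≤ k) (c : Finset (Fin m)) (hc : c.card = k) :
    {ω : ℕ → Fin m | firstDistinct k ω = c} = ⋃ n, Fev k n c := by
  ext ω
  simp only [Set.mem_setOf_eq, Set.mem_iUnion]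
  unfold firstDistinct
  by_cases h : ∃ n, k ≤ ((Finset.range n).image ω).card
  · rw [dif_pos h]
    constructor
    · intro heq
      exact ⟨Nat.find h, mem_Fev.2 ⟨heq, fun j hj => lt_of_not_ge (Nat.find_min h hj)⟩⟩
    · rintro ⟨n, hn⟩
      rw [mem_Fev] at hn
      obtain ⟨h1, h2⟩ := hn
      have hkn : k ≤ ((Finset.range n).image ω).card := by rw [h1, hc]
      have hle : Nat.find h ≤ n := Nat.find_min' h hkn
      have hge : n ≤ Nat.find h := by
        by_contra hlt
        push_neg at hlt
        exact absurd (Nat.find_spec h) (not_le.2 (h2 _ hlt))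
      rw [le_antisymm hle hge]
      exact h1
  · rw [dif_neg h]
    constructor
    · intro h0
      exfalso
      rw [← h0] at hc
      simp only [Finset.card_empty] at hc
      omega
    · rintro ⟨n, hn⟩
      rw [mem_Fev] at hn
      exact absurd ⟨n, by rw [hn.1, hc]⟩ h

lemma Fev_disjoint {k : ℕ} (c : Finset (Fin m)) (hc : c.card = k) :
    Pairwise (Function.onFun Disjoint fun n => Fev k n c) := by
  intro a b hab
  wlog hlt : a < b generalizing a b
  · exact (this hab.symm (by omega)).symm
  refine Set.disjoint_left.2 fun ω ha hb => ?_
  rw [mem_Fev] at ha hb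
  have hcard := hb.2 a hlt
  rw [ha.1, hc] at hcard
  omega

lemma pimg_comp {n : ℕ} (σ : Equiv.Perm (Fin m)) (p : Fin n → Fin m) (j : ℕ) :
    pimg (σ ∘ p) j = (pimg p j).image σ := by
  simp [pimg, Finset.image_image]

lemma pred_comp {k n : ℕ} (σ : Equiv.Perm (Fin m)) (c : Finset (Fin m)) (p : Fin n → Fin m) :
    Pred k n (c.image σ) (σ ∘ p) ↔ Pred k n c p := by
  unfold Pred
  rw [pimg_comp]
  constructor
  · rintro ⟨h1, h2⟩
    refine ⟨Finset.image_injective σ.injective h1, fun j hj => ?_⟩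
    have := h2 j hj
    rwa [pimg_comp, Finset.card_image_of_injective _ σ.injective] at this
  · rintro ⟨h1, h2⟩
    refine ⟨by rw [h1], fun j hj => ?_⟩
    rw [pimg_comp, Finset.card_image_of_injective _ σ.injective]
    exact h2 j hj

lemma pset_card_eq {k n : ℕ} (σ : Equiv.Perm (Fin m)) (c : Finset (Fin m)) :
    (pset n (Pred k n c)).card = (pset n (Pred k n (c.image σ))).card := by
  apply Finset.card_bij (fun p _ => σ ∘ p)
  · intro p hp
    rw [mem_pset] at hp ⊢
    exact (pred_comp σ c p).2 hp
  · intro p hp q hq h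
    funext i
    exact σ.injective (congrFun h i)
  · intro q hq
    rw [mem_pset] at hq
    have hq' : ⇑σ ∘ (fun i => σ.symm (q i)) = q := by
      funext i; simp
    refine ⟨fun i => σ.symm (q i), ?_, hq'⟩
    rw [mem_pset]
    exact (pred_comp σ c _).1 (by rwa [hq'])

lemma exists_perm_image {c c' : Finset (Fin m)} (h : c.card = c'.card) :
    ∃ σ : Equiv.Perm (Fin m), c.image σ = c' := by
  classical
  have e : {x // x ∈ c} ≃ {x // x ∈ c'} := by
    apply Fintype.equivOfCardEq
    rw [Fintype.card_coe, Fintype.card_coe, h]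
  refine ⟨e.extendSubtype, ?_⟩
  apply Finset.eq_of_subset_of_card_le
  · intro b hb
    rw [Finset.mem_image] at hb
    obtain ⟨a, ha, rfl⟩ := hb
    exact e.extendSubtype_mem a ha
  · rw [Finset.card_image_of_injective _ e.extendSubtype.injective, h]

lemma pset_card_lt_bound {k : ℕ} (n : ℕ) (hk : 1 ≤ k) (hkm : k ≤ m) :
    ((pset n (fun p : Fin n → Fin m => (pimg p n).card < k)).card : ℕ)
      ≤ m.choose (k - 1) * (k - 1) ^ n := by
  classical
  have hsub : pset n (fun p : Fin n → Fin m => (pimg p n).card < k) ⊆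
      (Finset.powersetCard (k - 1) (Finset.univ : Finset (Fin m))).biUnion
        (fun T => Fintype.piFinset fun _ : Fin n => T) := by
    intro p hp
    rw [mem_pset, pimg_top] at hp
    obtain ⟨T, hT1, _, hT3⟩ := Finset.exists_subsuperset_card_eq
      (Finset.subset_univ (Finset.univ.image p)) (by omega : (Finset.univ.image p).card ≤ k - 1)
      (by rw [Finset.card_univ, Fintype.card_fin]; omega)
    rw [Finset.mem_biUnion]
    refine ⟨T, Finset.mem_powersetCard.2 ⟨Finset.subset_univ T, hT3⟩,
      Fintype.mem_piFinset.2 fun i => hT1 ?_⟩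
    exact Finset.mem_image_of_mem p (Finset.mem_univ i)
  calc (pset n (fun p : Fin n → Fin m => (pimg p n).card < k)).card
      ≤ ((Finset.powersetCard (k - 1) (Finset.univ : Finset (Fin m))).biUnion
          (fun T => Fintype.piFinset fun _ : Fin n => T)).card := Finset.card_le_card hsub
    _ ≤ ∑ T ∈ Finset.powersetCard (k - 1) (Finset.univ : Finset (Fin m)),
          (Fintype.piFinset fun _ : Fin n => T).card := Finset.card_biUnion_le
    _ = ∑ T ∈ Finset.powersetCard (k - 1) (Finset.univ : Finset (Fin m)), (k - 1) ^ n := by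
        apply Finset.sum_congr rfl
        intro T hT
        rw [Fintype.card_piFinset]
        rw [Finset.prod_const, Finset.card_univ, Fintype.card_fin,
          (Finset.mem_powersetCard.1 hT).2]
    _ = m.choose (k - 1) * (k - 1) ^ n := by
        rw [Finset.sum_const, Finset.card_powersetCard, Finset.card_univ, Fintype.card_fin,
          smul_eq_mul]

lemma card_fd {k : ℕ} (hk : 1 ≤ k) (ω : ℕ → Fin m)
    (h : ∃ n, k ≤ ((Finset.range n).image ω).card) :
    (firstDistinct k ω).card = k := by
  unfold firstDistinct
  rw [dif_pos h]
  have h1 : k ≤ ((Finset.range (Nat.find h)).image ω).card := Nat.find_spec h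
  rcases Nat.eq_zero_or_pos (Nat.find h) with h0 | hpos
  · rw [h0] at h1
    simp only [Finset.range_zero, Finset.image_empty, Finset.card_empty] at h1
    omega
  obtain ⟨N, hN⟩ : ∃ N, Nat.find h = N + 1 := ⟨Nat.find h - 1, by omega⟩
  have h2 : ¬ k ≤ ((Finset.range N).image ω).card := Nat.find_min h (by omega)
  have h3 : ((Finset.range (N + 1)).image ω).card ≤ ((Finset.range N).image ω).card + 1 := by
    rw [Finset.range_add_one, Finset.image_insert]
    exact Finset.card_insert_le _ _
  rw [hN] at h1 ⊢
  omega

end LossyAux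

open LossyAux in
/-- **Distribution of the lossy mapping.** Let `1 ≤ k ≤ m` and let `μ` be the infinite
product of the uniform probability measure on `Fin m` (characterized on cylinder sets:
the probability that the coordinates in a finite set `s` take prescribed values is
`(1/m)^|s|`). Then almost surely the sequence attains at least `k` distinct values, and
for every `k`-element subset `c` of `Fin m`, the probability that the set of the first `k`
pairwise-distinct values equals `c` is exactly `1 / C(m,k)`. -/
theorem lossy_mapping_uniform {m k : ℕ} (hm : 1 ≤ m) (hk : 1 ≤ k) (hkm : k ≤ m)
    (μ : Measure (ℕ → Fin m)) [IsProbabilityMeasure μ]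
    (hiid : ∀ (s : Finset ℕ) (f : ℕ → Fin m),
      μ {ω | ∀ i ∈ s, ω i = f i} = (1 / (m : ℝ≥0∞)) ^ s.card) :
    μ {ω | ∃ n, k ≤ ((Finset.range n).image ω).card} = 1 ∧
    ∀ c : Finset (Fin m), c.card = k →
      μ {ω | firstDistinct k ω = c} = 1 / (Nat.choose m k : ℝ≥0∞) := by
  classical
  have hm0 : (m : ℝ≥0∞) ≠ 0 := by
    simp only [ne_eq, Nat.cast_eq_zero]
    omega
  -- measure of a cylinder
  have hcyl : ∀ (n : ℕ) (p : Fin n → Fin m), μ (cyl n p) = (1 / (m : ℝ≥0∞)) ^ n := by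
    intro n p
    have hf : cyl n p = {ω : ℕ → Fin m | ∀ i ∈ Finset.range n,
        ω i = (fun i => if h : i < n then p ⟨i, h⟩ else (⟨0, hm⟩ : Fin m)) i} := by
      ext ω
      simp only [cyl, Set.mem_setOf_eq, Finset.mem_range]
      constructor
      · intro h i hi
        rw [dif_pos hi]
        exact h ⟨i, hi⟩
      · intro h i
        have := h i i.isLt
        rwa [dif_pos i.isLt] at this
    rw [hf, hiid, Finset.card_range]
  -- measure of a prefix event
  have hev : ∀ (n : ℕ) (P : (Fin n → Fin m) → Prop),
      μ {ω | P (fun i : Fin n => ω i)} =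
        ((pset n P).card : ℝ≥0∞) * (1 / (m : ℝ≥0∞)) ^ n := by
    intro n P
    rw [event_eq, measure_biUnion_finset]
    · rw [Finset.sum_congr rfl (fun p _ => hcyl n p), Finset.sum_const, nsmul_eq_mul]
    · intro p hp q hq hpq
      refine Set.disjoint_left.2 fun ω h1 h2 => hpq ?_
      funext i
      rw [← h1 i, ← h2 i]
    · intro p _
      exact measurableSet_cyl n p
  -- measurability of the "attains k distinct values" event
  have hGrw : {ω : ℕ → Fin m | ∃ n, k ≤ ((Finset.range n).image ω).card} =
      ⋃ n, {ω : ℕ → Fin m |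
        (fun p : Fin n → Fin m => k ≤ (pimg p n).card) (fun i : Fin n => ω i)} := by
    ext ω
    simp only [Set.mem_setOf_eq, Set.mem_iUnion]
    constructor
    · rintro ⟨n, hn⟩
      exact ⟨n, by rw [pimg_eq ω le_rfl]; exact hn⟩
    · rintro ⟨n, hn⟩
      rw [pimg_eq ω le_rfl] at hn
      exact ⟨n, hn⟩
  have hGmeas : MeasurableSet {ω : ℕ → Fin m | ∃ n, k ≤ ((Finset.range n).image ω).card} := by
    rw [hGrw]
    exact MeasurableSet.iUnion fun n =>
      measurableSet_event n (fun p : Fin n → Fin m => k ≤ (pimg p n).card)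
  -- Part (a) : the event has probability one
  have hG1 : μ {ω : ℕ → Fin m | ∃ n, k ≤ ((Finset.range n).image ω).card} = 1 := by
    rw [← prob_compl_eq_zero_iff hGmeas]
    have hbound : ∀ n : ℕ,
        μ {ω : ℕ → Fin m | ∃ n, k ≤ ((Finset.range n).image ω).card}ᶜ ≤
          (m.choose (k - 1) : ℝ≥0∞) * (((k - 1 : ℕ) : ℝ≥0∞) * (1 / (m : ℝ≥0∞))) ^ n := by
      intro n
      have hsub : {ω : ℕ → Fin m | ∃ n, k ≤ ((Finset.range n).image ω).card}ᶜ ⊆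
          {ω : ℕ → Fin m |
            (fun p : Fin n → Fin m => (pimg p n).card < k) (fun i : Fin n => ω i)} := by
        intro ω hω
        simp only [Set.mem_compl_iff, Set.mem_setOf_eq, not_exists, not_le] at hω
        show (pimg (fun i : Fin n => ω i) n).card < k
        rw [pimg_eq ω le_rfl]
        exact hω n
      calc μ {ω : ℕ → Fin m | ∃ n, k ≤ ((Finset.range n).image ω).card}ᶜ
          ≤ μ {ω : ℕ → Fin m |
              (fun p : Fin n → Fin m => (pimg p n).card < k) (fun i : Fin n => ω i)} :=
            measure_mono hsub
        _ = ((pset n (fun p : Fin n → Fin m => (pimg p n).card < k)).card : ℝ≥0∞) *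
              (1 / (m : ℝ≥0∞)) ^ n := hev n (fun p : Fin n → Fin m => (pimg p n).card < k)
        _ ≤ ((m.choose (k - 1) * (k - 1) ^ n : ℕ) : ℝ≥0∞) * (1 / (m : ℝ≥0∞)) ^ n := by
            apply mul_le_mul_left
            exact_mod_cast pset_card_lt_bound n hk hkm
        _ = (m.choose (k - 1) : ℝ≥0∞) * (((k - 1 : ℕ) : ℝ≥0∞) * (1 / (m : ℝ≥0∞))) ^ n := by
            push_cast
            rw [mul_pow]
            ring
    have hrlt : ((k - 1 : ℕ) : ℝ≥0∞) * (1 / (m : ℝ≥0∞)) < 1 := by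
      rw [one_div, ← div_eq_mul_inv]
      rw [ENNReal.div_lt_iff (Or.inl hm0) (Or.inl (ENNReal.natCast_ne_top m))]
      rw [one_mul]
      exact_mod_cast (by omega : k - 1 < m)
    have htend : Filter.Tendsto
        (fun n : ℕ => (m.choose (k - 1) : ℝ≥0∞) *
          (((k - 1 : ℕ) : ℝ≥0∞) * (1 / (m : ℝ≥0∞))) ^ n)
        Filter.atTop (nhds 0) := by
      have := ENNReal.Tendsto.const_mul
        (ENNReal.tendsto_pow_atTop_nhds_zero_of_lt_one hrlt)
        (Or.inr (ENNReal.natCast_ne_top (m.choose (k - 1))))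
      simpa using this
    have := ge_of_tendsto' htend hbound
    exact le_antisymm this zero_le
  refine ⟨hG1, ?_⟩
  -- Part (b)
  intro c hc
  have hFdrw : ∀ c' : Finset (Fin m), c'.card = k →
      {ω : ℕ → Fin m | firstDistinct k ω = c'} = ⋃ n, Fev k n c' :=
    fun c' hc' => fd_eq_iUnion hk c' hc'
  have hFdmeas : ∀ c' : Finset (Fin m), c'.card = k →
      MeasurableSet {ω : ℕ → Fin m | firstDistinct k ω = c'} := by
    intro c' hc'
    rw [hFdrw c' hc']
    exact MeasurableSet.iUnion fun n => measurableSet_event n (Pred k n c')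
  have hsum : ∀ c' : Finset (Fin m), c'.card = k →
      μ {ω : ℕ → Fin m | firstDistinct k ω = c'} =
        ∑' n : ℕ, ((pset n (Pred k n c')).card : ℝ≥0∞) * (1 / (m : ℝ≥0∞)) ^ n := by
    intro c' hc'
    rw [hFdrw c' hc', measure_iUnion (Fev_disjoint c' hc')
      (fun n => measurableSet_event n (Pred k n c'))]
    exact tsum_congr fun n => hev n (Pred k n c')
  have hqeq : ∀ c' : Finset (Fin m), c'.card = k →
      μ {ω : ℕ → Fin m | firstDistinct k ω = c'} =
        μ {ω : ℕ → Fin m | firstDistinct k ω = c} := by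
    intro c' hc'
    obtain ⟨σ, hσ⟩ := exists_perm_image (hc'.trans hc.symm)
    rw [hsum c' hc', hsum c hc]
    exact tsum_congr fun n => by rw [← hσ, ← pset_card_eq σ c']
  -- the union over all k-subsets is the a.s. event
  set S : Finset (Finset (Fin m)) := Finset.powersetCard k (Finset.univ : Finset (Fin m))
    with hS
  have hmemS : ∀ c' : Finset (Fin m), c' ∈ S ↔ c'.card = k := by
    intro c'
    rw [hS, Finset.mem_powersetCard]
    exact ⟨fun h => h.2, fun h => ⟨Finset.subset_univ _, h⟩⟩
  have hunion : (⋃ c' ∈ S, {ω : ℕ → Fin m | firstDistinct k ω = c'}) =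
      {ω : ℕ → Fin m | ∃ n, k ≤ ((Finset.range n).image ω).card} := by
    ext ω
    simp only [Set.mem_iUnion, Set.mem_setOf_eq]
    constructor
    · rintro ⟨c', hc', rfl⟩
      by_contra h
      have : firstDistinct k ω = ∅ := by
        unfold firstDistinct
        rw [dif_neg h]
      rw [this] at hc'
      rw [hmemS] at hc'
      simp only [Finset.card_empty] at hc'
      omega
    · intro h
      exact ⟨firstDistinct k ω, (hmemS _).2 (card_fd hk ω h), rfl⟩
  have hsum1 : ∑ c' ∈ S, μ {ω : ℕ → Fin m | firstDistinct k ω = c'} = 1 := by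
    rw [← measure_biUnion_finset]
    · rw [hunion, hG1]
    · intro a ha b hb hab
      refine Set.disjoint_left.2 fun ω h1 h2 => hab ?_
      rw [Set.mem_setOf_eq] at h1 h2
      rw [← h1, ← h2]
    · intro c' hc'
      exact hFdmeas c' ((hmemS c').1 hc')
  have hconst : ∑ c' ∈ S, μ {ω : ℕ → Fin m | firstDistinct k ω = c'} =
      (S.card : ℝ≥0∞) * μ {ω : ℕ → Fin m | firstDistinct k ω = c} := by
    rw [Finset.sum_congr rfl (fun c' hc' => hqeq c' ((hmemS c').1 hc')),
      Finset.sum_const, nsmul_eq_mul]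
  have hScard : S.card = m.choose k := by
    rw [hS, Finset.card_powersetCard, Finset.card_univ, Fintype.card_fin]
  have hfinal : (m.choose k : ℝ≥0∞) * μ {ω : ℕ → Fin m | firstDistinct k ω = c} = 1 := by
    rw [← hScard]
    rw [← hconst]
    exact hsum1
  have := ENNReal.eq_inv_of_mul_eq_one_left
    (by rw [mul_comm] at hfinal; exact hfinal)
  rw [this, one_div]
end

section
/- Let m ≥ 1 and 1 ≤ k ≤ m. Let Ω = (ℕ → Fin m) × (ℕ → Fin m) be equipped with the product of two copies of the infinite product of the uniform probability measure on Fin m (two independent i.i.d. uniform sequences). For a sequence ω, let S(ω) be the set of its first k pairwise-distinct values (defined almost surely). Then the probability that S of the first sequence equals S of the second sequence is exactly 1 / C(m,k). (Equivalently: for distinct inputs x ≠ y, the lossy mapping with uniformly random hash functions maps x and y to the same constant-weight codeword with probability 1/C(m,k).) -/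
open MeasureTheory ENNReal

namespace LossyAux

variable {m : ℕ}

/-- The sequence `ω` stops exactly at time `n` with value set `S`. -/
def stopCond (k n : ℕ) (S : Finset (Fin m)) (ω : ℕ → Fin m) : Prop :=
  (Finset.range n).image ω = S ∧ ∀ j < n, ((Finset.range j).image ω).card < k

lemma image_agree {n j : ℕ} (hj : j ≤ n) {ω ω' : ℕ → Fin m}
    (h : ∀ i < n, ω i = ω' i) :
    (Finset.range j).image ω = (Finset.range j).image ω' := by
  apply Finset.image_congr
  intro i hi
  simp only [Finset.coe_range, Set.mem_Iio] at hi
  exact h i (lt_of_lt_of_le hi hj)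

lemma stopCond_congr {k n : ℕ} {S : Finset (Fin m)} {ω ω' : ℕ → Fin m}
    (h : ∀ i < n, ω i = ω' i) : stopCond k n S ω ↔ stopCond k n S ω' := by
  unfold stopCond
  have himg : ∀ j ≤ n, (Finset.range j).image ω = (Finset.range j).image ω' :=
    fun j hj => image_agree hj h
  rw [himg n le_rfl]
  constructor <;> rintro ⟨h1, h2⟩ <;> refine ⟨h1, fun j hj => ?_⟩
  · rw [← himg j hj.le]; exact h2 j hj
  · rw [himg j hj.le]; exact h2 j hj

lemma stopCond_unique {k n n' : ℕ} {S : Finset (Fin m)} {ω : ℕ → Fin m}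
    (hS : S.card = k) (h : stopCond k n S ω) (h' : stopCond k n' S ω) : n = n' := by
  by_contra hne
  rcases Nat.lt_or_ge n n' with hlt | hge
  · have := h'.2 n hlt
    rw [h.1, hS] at this
    exact lt_irrefl _ this
  · have hlt : n' < n := lt_of_le_of_ne hge fun e => hne e.symm
    have := h.2 n' hlt
    rw [h'.1, hS] at this
    exact lt_irrefl _ this

lemma firstDistinct_eq_iff {k : ℕ} (hk : 1 ≤ k) {S : Finset (Fin m)} (hS : S.card = k)
    (ω : ℕ → Fin m) : firstDistinct k ω = S ↔ ∃ n, stopCond k n S ω := by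
  constructor
  · intro h
    by_cases hex : ∃ n, k ≤ ((Finset.range n).image ω).card
    · refine ⟨Nat.find hex, ?_, fun j hj => ?_⟩
      · rw [← h]; simp only [firstDistinct, dif_pos hex]
      · have := Nat.find_min hex hj
        omega
    · exfalso
      have h0 : firstDistinct k ω = ∅ := by simp only [firstDistinct, dif_neg hex]
      rw [h0] at h
      rw [← h] at hS
      simp only [Finset.card_empty] at hS
      omega
  · rintro ⟨n, h1, h2⟩
    have hex : ∃ n, k ≤ ((Finset.range n).image ω).card := ⟨n, by rw [h1, hS]⟩
    have hfind : Nat.find hex = n := by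
      apply le_antisymm
      · exact Nat.find_le (by rw [h1, hS])
      · by_contra hlt
        push_neg at hlt
        have h3 := h2 _ hlt
        have h4 := Nat.find_spec hex
        omega
    simp only [firstDistinct, dif_pos hex, hfind, h1]

lemma card_firstDistinct {k : ℕ} (hk : 1 ≤ k) {ω : ℕ → Fin m}
    (hex : ∃ n, k ≤ ((Finset.range n).image ω).card) :
    (firstDistinct k ω).card = k := by
  simp only [firstDistinct, dif_pos hex]
  have hspec := Nat.find_spec hex
  rcases Nat.eq_zero_or_pos (Nat.find hex) with h0 | hpos
  · rw [h0] at hspec; simp only [Finset.range_zero, Finset.image_empty,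
      Finset.card_empty] at hspec; omega
  · obtain ⟨j, hj⟩ : ∃ j, Nat.find hex = j + 1 := ⟨Nat.find hex - 1, by omega⟩
    have hmin : ((Finset.range j).image ω).card < k := by
      have := Nat.find_min hex (show j < Nat.find hex by omega)
      omega
    rw [hj] at hspec ⊢
    rw [Finset.range_add_one, Finset.image_insert] at hspec ⊢
    have hle := Finset.card_insert_le (ω j) ((Finset.range j).image ω)
    omega

/-- Extend a tuple to a full sequence with a junk value. -/
def extFn (hm : 0 < m) {n : ℕ} (f : Fin n → Fin m) : ℕ → Fin m :=
  fun i => if h : i < n then f ⟨i, h⟩ else ⟨0, hm⟩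

open Classical in
/-- The set of length-`n` patterns that stop exactly at `n` with value set `S`. -/
noncomputable def patterns (hm : 0 < m) (k n : ℕ) (S : Finset (Fin m)) :
    Finset (Fin n → Fin m) :=
  Finset.univ.filter fun f => stopCond k n S (extFn hm f)

lemma extFn_restrict (hm : 0 < m) {n : ℕ} (ω : ℕ → Fin m) :
    ∀ i < n, extFn hm (fun j : Fin n => ω j) i = ω i := by
  intro i hi; simp [extFn, hi]

lemma mem_patterns (hm : 0 < m) {k n : ℕ} {S : Finset (Fin m)} (ω : ℕ → Fin m) :
    (fun i : Fin n => ω i) ∈ patterns hm k n S ↔ stopCond k n S ω := by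
  classical
  simp only [patterns, Finset.mem_filter, Finset.mem_univ, true_and]
  exact stopCond_congr (extFn_restrict hm ω)

/-- The probability that the first `k` distinct values form the set `S`. -/
noncomputable def pSet (hm : 0 < m) (k : ℕ) (S : Finset (Fin m)) : ℝ≥0∞ :=
  ∑' n : ℕ, ((patterns hm k n S).card : ℝ≥0∞) * (1 / (m : ℝ≥0∞)) ^ n

lemma measurable_restrict (n : ℕ) :
    Measurable (fun ω : ℕ → Fin m => fun i : Fin n => ω i) :=
  measurable_pi_lambda _ fun i => measurable_pi_apply _

section Measure

variable (μ : Measure ((ℕ → Fin m) × (ℕ → Fin m)))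

lemma measure_cylinder (hm : 0 < m)
    (hiid : ∀ (s t : Finset ℕ) (f g : ℕ → Fin m),
      μ {ω | (∀ i ∈ s, ω.1 i = f i) ∧ (∀ j ∈ t, ω.2 j = g j)} =
        (1 / (m : ℝ≥0∞)) ^ s.card * (1 / (m : ℝ≥0∞)) ^ t.card)
    {n n' : ℕ} (f : Fin n → Fin m) (g : Fin n' → Fin m) :
    μ {ω | (fun i : Fin n => ω.1 i) = f ∧ (fun i : Fin n' => ω.2 i) = g} =
      (1 / (m : ℝ≥0∞)) ^ n * (1 / (m : ℝ≥0∞)) ^ n' := by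
  have h := hiid (Finset.range n) (Finset.range n') (extFn hm f) (extFn hm g)
  rw [Finset.card_range, Finset.card_range] at h
  rw [← h]
  congr 1
  ext ω
  simp only [Set.mem_setOf_eq, funext_iff]
  constructor
  · rintro ⟨h1, h2⟩
    refine ⟨fun i hi => ?_, fun j hj => ?_⟩
    · rw [Finset.mem_range] at hi
      have : extFn hm f i = f ⟨i, hi⟩ := by simp [extFn, hi]
      rw [this]; exact h1 ⟨i, hi⟩
    · rw [Finset.mem_range] at hj
      have : extFn hm g j = g ⟨j, hj⟩ := by simp [extFn, hj]
      rw [this]; exact h2 ⟨j, hj⟩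
  · rintro ⟨h1, h2⟩
    refine ⟨fun i => ?_, fun j => ?_⟩
    · have := h1 i (Finset.mem_range.mpr i.2)
      simpa [extFn, i.2] using this
    · have := h2 j (Finset.mem_range.mpr j.2)
      simpa [extFn, j.2] using this

lemma measure_cylSet (hm : 0 < m)
    (hiid : ∀ (s t : Finset ℕ) (f g : ℕ → Fin m),
      μ {ω | (∀ i ∈ s, ω.1 i = f i) ∧ (∀ j ∈ t, ω.2 j = g j)} =
        (1 / (m : ℝ≥0∞)) ^ s.card * (1 / (m : ℝ≥0∞)) ^ t.card)
    {n n' : ℕ} (A : Finset (Fin n → Fin m)) (B : Finset (Fin n' → Fin m)) :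
    μ {ω | (fun i : Fin n => ω.1 i) ∈ A ∧ (fun i : Fin n' => ω.2 i) ∈ B} =
      ((A.card : ℝ≥0∞) * (1 / (m : ℝ≥0∞)) ^ n) *
        ((B.card : ℝ≥0∞) * (1 / (m : ℝ≥0∞)) ^ n') := by
  have hset : {ω : (ℕ → Fin m) × (ℕ → Fin m) |
      (fun i : Fin n => ω.1 i) ∈ A ∧ (fun i : Fin n' => ω.2 i) ∈ B}
      = ⋃ p ∈ (A ×ˢ B : Finset _),
          {ω : (ℕ → Fin m) × (ℕ → Fin m) |
            (fun i : Fin n => ω.1 i) = p.1 ∧ (fun i : Fin n' => ω.2 i) = p.2} := by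
    ext ω
    simp only [Set.mem_setOf_eq, Set.mem_iUnion, Finset.mem_product]
    constructor
    · rintro ⟨hA, hB⟩
      exact ⟨((fun i : Fin n => ω.1 i), (fun i : Fin n' => ω.2 i)), ⟨hA, hB⟩, rfl, rfl⟩
    · rintro ⟨p, ⟨hA, hB⟩, h1, h2⟩
      rw [h1, h2]; exact ⟨hA, hB⟩
  rw [hset, measure_biUnion_finset ?_ ?_]
  · rw [Finset.sum_congr rfl fun p _ => measure_cylinder μ hm hiid p.1 p.2]
    rw [Finset.sum_const, Finset.card_product, nsmul_eq_mul]
    push_cast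
    ring
  · intro p hp q hq hpq
    rw [Function.onFun, Set.disjoint_left]
    rintro ω ⟨h1, h2⟩ ⟨h3, h4⟩
    exact hpq (Prod.ext (h1.symm.trans h3) (h2.symm.trans h4))
  · intro p hp
    have m1 : MeasurableSet {ω : (ℕ → Fin m) × (ℕ → Fin m) |
        (fun i : Fin n => ω.1 i) = p.1} :=
      ((measurable_restrict n).comp measurable_fst) (measurableSet_singleton p.1)
    have m2 : MeasurableSet {ω : (ℕ → Fin m) × (ℕ → Fin m) |
        (fun i : Fin n' => ω.2 i) = p.2} :=
      ((measurable_restrict n').comp measurable_snd) (measurableSet_singleton p.2)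
    exact m1.inter m2

variable {k : ℕ}

lemma pairEvent_eq (hm : 0 < m) (hk : 1 ≤ k) {S T : Finset (Fin m)}
    (hS : S.card = k) (hT : T.card = k) :
    {ω : (ℕ → Fin m) × (ℕ → Fin m) | firstDistinct k ω.1 = S ∧ firstDistinct k ω.2 = T}
      = ⋃ q : ℕ × ℕ, {ω : (ℕ → Fin m) × (ℕ → Fin m) |
          (fun i : Fin q.1 => ω.1 i) ∈ patterns hm k q.1 S ∧
          (fun i : Fin q.2 => ω.2 i) ∈ patterns hm k q.2 T} := by
  ext ω
  simp only [Set.mem_setOf_eq, Set.mem_iUnion, firstDistinct_eq_iff hk hS,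
    firstDistinct_eq_iff hk hT, mem_patterns hm]
  constructor
  · rintro ⟨⟨n, hn⟩, ⟨n', hn'⟩⟩
    exact ⟨(n, n'), hn, hn'⟩
  · rintro ⟨q, h1, h2⟩
    exact ⟨⟨q.1, h1⟩, ⟨q.2, h2⟩⟩

lemma measurableSet_patternEvent (hm : 0 < m) {n n' : ℕ}
    (A : Finset (Fin n → Fin m)) (B : Finset (Fin n' → Fin m)) :
    MeasurableSet {ω : (ℕ → Fin m) × (ℕ → Fin m) |
      (fun i : Fin n => ω.1 i) ∈ A ∧ (fun i : Fin n' => ω.2 i) ∈ B} := by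
  have m1 : MeasurableSet {ω : (ℕ → Fin m) × (ℕ → Fin m) | (fun i : Fin n => ω.1 i) ∈ A} :=
    ((measurable_restrict n).comp measurable_fst) A.measurableSet
  have m2 : MeasurableSet {ω : (ℕ → Fin m) × (ℕ → Fin m) | (fun i : Fin n' => ω.2 i) ∈ B} :=
    ((measurable_restrict n').comp measurable_snd) B.measurableSet
  exact m1.inter m2

lemma measurableSet_pairEvent (hm : 0 < m) (hk : 1 ≤ k) {S T : Finset (Fin m)}
    (hS : S.card = k) (hT : T.card = k) :
    MeasurableSet {ω : (ℕ → Fin m) × (ℕ → Fin m) |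
      firstDistinct k ω.1 = S ∧ firstDistinct k ω.2 = T} := by
  rw [pairEvent_eq hm hk hS hT]
  exact MeasurableSet.iUnion fun q => measurableSet_patternEvent hm _ _

lemma measure_pairEvent (hm : 0 < m)
    (μ : Measure ((ℕ → Fin m) × (ℕ → Fin m)))
    (hiid : ∀ (s t : Finset ℕ) (f g : ℕ → Fin m),
      μ {ω | (∀ i ∈ s, ω.1 i = f i) ∧ (∀ j ∈ t, ω.2 j = g j)} =
        (1 / (m : ℝ≥0∞)) ^ s.card * (1 / (m : ℝ≥0∞)) ^ t.card)
    (hk : 1 ≤ k) {S T : Finset (Fin m)} (hS : S.card = k) (hT : T.card = k) :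
    μ {ω | firstDistinct k ω.1 = S ∧ firstDistinct k ω.2 = T} =
      pSet hm k S * pSet hm k T := by
  rw [pairEvent_eq hm hk hS hT]
  rw [measure_iUnion ?_ fun q => measurableSet_patternEvent hm _ _]
  · rw [tsum_congr fun q : ℕ × ℕ => measure_cylSet μ hm hiid
      (patterns hm k q.1 S) (patterns hm k q.2 T)]
    rw [ENNReal.tsum_prod']
    unfold pSet
    rw [← ENNReal.tsum_mul_right]
    exact tsum_congr fun n => by rw [← ENNReal.tsum_mul_left]
  · intro q q' hqq'
    rw [Function.onFun, Set.disjoint_left]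
    rintro ω ⟨h1, h2⟩ ⟨h3, h4⟩
    rw [mem_patterns hm] at h1 h2 h3 h4
    exact hqq' (Prod.ext (stopCond_unique hS h1 h3) (stopCond_unique hT h2 h4))

lemma trivial_snd_event (P : (ℕ → Fin m) × (ℕ → Fin m) → Prop) :
    {ω : (ℕ → Fin m) × (ℕ → Fin m) | P ω} =
      {ω : (ℕ → Fin m) × (ℕ → Fin m) | P ω ∧
        (fun i : Fin 0 => ω.2 i) ∈ (Finset.univ : Finset (Fin 0 → Fin m))} := by
  ext ω; exact (and_iff_left (Finset.mem_univ _)).symm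

lemma card_univ_fin_zero : ((Finset.univ : Finset (Fin 0 → Fin m)).card : ℝ≥0∞) = 1 := by
  haveI : Unique (Fin 0 → Fin m) :=
    ⟨⟨fun i => i.elim0⟩, fun f => funext fun i => i.elim0⟩
  rw [Finset.card_univ, Fintype.card_unique, Nat.cast_one]

lemma measure_fstPattern (hm : 0 < m)
    (μ : Measure ((ℕ → Fin m) × (ℕ → Fin m)))
    (hiid : ∀ (s t : Finset ℕ) (f g : ℕ → Fin m),
      μ {ω | (∀ i ∈ s, ω.1 i = f i) ∧ (∀ j ∈ t, ω.2 j = g j)} =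
        (1 / (m : ℝ≥0∞)) ^ s.card * (1 / (m : ℝ≥0∞)) ^ t.card)
    {n : ℕ} (A : Finset (Fin n → Fin m)) :
    μ {ω | (fun i : Fin n => ω.1 i) ∈ A} =
      (A.card : ℝ≥0∞) * (1 / (m : ℝ≥0∞)) ^ n := by
  rw [trivial_snd_event (fun ω => (fun i : Fin n => ω.1 i) ∈ A),
    measure_cylSet μ hm hiid A (Finset.univ : Finset (Fin 0 → Fin m)),
    card_univ_fin_zero]
  simp

lemma singleEvent_eq (hm : 0 < m) (hk : 1 ≤ k) {S : Finset (Fin m)} (hS : S.card = k) :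
    {ω : (ℕ → Fin m) × (ℕ → Fin m) | firstDistinct k ω.1 = S}
      = ⋃ n : ℕ, {ω : (ℕ → Fin m) × (ℕ → Fin m) |
          (fun i : Fin n => ω.1 i) ∈ patterns hm k n S} := by
  ext ω
  simp only [Set.mem_setOf_eq, Set.mem_iUnion, firstDistinct_eq_iff hk hS,
    mem_patterns hm]

lemma measurableSet_fstPattern (hm : 0 < m) {n : ℕ} (A : Finset (Fin n → Fin m)) :
    MeasurableSet {ω : (ℕ → Fin m) × (ℕ → Fin m) | (fun i : Fin n => ω.1 i) ∈ A} :=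
  ((measurable_restrict n).comp measurable_fst) A.measurableSet

lemma measurableSet_singleEvent (hm : 0 < m) (hk : 1 ≤ k) {S : Finset (Fin m)}
    (hS : S.card = k) :
    MeasurableSet {ω : (ℕ → Fin m) × (ℕ → Fin m) | firstDistinct k ω.1 = S} := by
  rw [singleEvent_eq hm hk hS]
  exact MeasurableSet.iUnion fun n => measurableSet_fstPattern hm _

lemma measure_singleEvent (hm : 0 < m)
    (μ : Measure ((ℕ → Fin m) × (ℕ → Fin m)))
    (hiid : ∀ (s t : Finset ℕ) (f g : ℕ → Fin m),
      μ {ω | (∀ i ∈ s, ω.1 i = f i) ∧ (∀ j ∈ t, ω.2 j = g j)} =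
        (1 / (m : ℝ≥0∞)) ^ s.card * (1 / (m : ℝ≥0∞)) ^ t.card)
    (hk : 1 ≤ k) {S : Finset (Fin m)} (hS : S.card = k) :
    μ {ω | firstDistinct k ω.1 = S} = pSet hm k S := by
  rw [singleEvent_eq hm hk hS]
  rw [measure_iUnion ?_ fun n => measurableSet_fstPattern hm (patterns hm k n S)]
  · exact tsum_congr fun n => measure_fstPattern hm μ hiid _
  · intro n n' hnn'
    rw [Function.onFun, Set.disjoint_left]
    rintro ω h1 h2
    rw [Set.mem_setOf_eq, mem_patterns hm] at h1 h2
    exact hnn' (stopCond_unique hS h1 h2)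

lemma image_range_restrict (n : ℕ) (ω : ℕ → Fin m) :
    Finset.univ.image (fun i : Fin n => ω i) = (Finset.range n).image ω := by
  ext x
  simp only [Finset.mem_image, Finset.mem_univ, true_and, Finset.mem_range]
  constructor
  · rintro ⟨i, rfl⟩; exact ⟨i, i.2, rfl⟩
  · rintro ⟨i, hi, rfl⟩; exact ⟨⟨i, hi⟩, rfl⟩

lemma measure_never (hm : 0 < m) (hk : 1 ≤ k) (hkm : k ≤ m)
    (hiid : ∀ (s t : Finset ℕ) (f g : ℕ → Fin m),
      μ {ω | (∀ i ∈ s, ω.1 i = f i) ∧ (∀ j ∈ t, ω.2 j = g j)} =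
        (1 / (m : ℝ≥0∞)) ^ s.card * (1 / (m : ℝ≥0∞)) ^ t.card) :
    μ {ω : (ℕ → Fin m) × (ℕ → Fin m) | ∀ n, ((Finset.range n).image ω.1).card < k} = 0 := by
  classical
  have hm0 : (m : ℝ≥0∞) ≠ 0 := by
    simp only [ne_eq, Nat.cast_eq_zero]; omega
  have hmtop : (m : ℝ≥0∞) ≠ ∞ := ENNReal.natCast_ne_top m
  apply ENNReal.eq_zero_of_le_mul_pow (ε := (Nat.choose m (k - 1) : NNReal))
    (r := ((k - 1 : ℕ) : ℝ≥0∞) * (1 / (m : ℝ≥0∞)))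
  · -- r < 1
    have h1m0 : (1 / (m : ℝ≥0∞)) ≠ 0 := by
      simp only [ne_eq, ENNReal.div_eq_zero_iff]
      push_neg
      exact ⟨fun h => absurd h one_ne_zero, hmtop⟩
    have h1mtop : (1 / (m : ℝ≥0∞)) ≠ ∞ := by
      simp [ENNReal.div_eq_top, hm0]
    have hlt : ((k - 1 : ℕ) : ℝ≥0∞) < (m : ℝ≥0∞) := by
      rw [Nat.cast_lt]; omega
    calc ((k - 1 : ℕ) : ℝ≥0∞) * (1 / (m : ℝ≥0∞))
        < (m : ℝ≥0∞) * (1 / (m : ℝ≥0∞)) := by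
          rw [ENNReal.mul_lt_mul_iff_left h1m0 h1mtop]; exact hlt
      _ = 1 := by
          rw [mul_one_div, ENNReal.div_self hm0 hmtop]
  · intro n
    set Bad : Finset (Fin n → Fin m) :=
      Finset.univ.filter fun f => (Finset.univ.image f).card < k with hBad
    have hsub : {ω : (ℕ → Fin m) × (ℕ → Fin m) |
        ∀ n, ((Finset.range n).image ω.1).card < k}
        ⊆ {ω | (fun i : Fin n => ω.1 i) ∈ Bad} := by
      intro ω hω
      simp only [hBad, Finset.mem_filter, Finset.mem_univ, true_and, Set.mem_setOf_eq]
      rw [image_range_restrict]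
      exact hω n
    have hcount : Bad.card ≤ Nat.choose m (k - 1) * (k - 1) ^ n := by
      have hsub2 : Bad ⊆ (Finset.powersetCard (k - 1)
          (Finset.univ : Finset (Fin m))).biUnion
            (fun T => Fintype.piFinset fun _ : Fin n => T) := by
        intro f hf
        simp only [hBad, Finset.mem_filter, Finset.mem_univ, true_and] at hf
        obtain ⟨T, hTsub, -, hTcard⟩ := Finset.exists_subsuperset_card_eq
          (Finset.subset_univ (Finset.univ.image f))
          (show (Finset.univ.image f).card ≤ k - 1 by omega)
          (by simp only [Finset.card_univ, Fintype.card_fin]; omega)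
        rw [Finset.mem_biUnion]
        refine ⟨T, Finset.mem_powersetCard.mpr ⟨Finset.subset_univ T, hTcard⟩, ?_⟩
        rw [Fintype.mem_piFinset]
        exact fun i => hTsub (Finset.mem_image_of_mem f (Finset.mem_univ i))
      calc Bad.card ≤ _ := Finset.card_le_card hsub2
        _ ≤ ∑ T ∈ Finset.powersetCard (k - 1) (Finset.univ : Finset (Fin m)),
              (Fintype.piFinset fun _ : Fin n => T).card := Finset.card_biUnion_le
        _ = ∑ T ∈ Finset.powersetCard (k - 1) (Finset.univ : Finset (Fin m)),
              (k - 1) ^ n := by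
            apply Finset.sum_congr rfl
            intro T hT
            rw [Fintype.card_piFinset]
            rw [Finset.prod_const, Finset.card_univ, Fintype.card_fin,
              (Finset.mem_powersetCard.mp hT).2]
        _ = Nat.choose m (k - 1) * (k - 1) ^ n := by
            rw [Finset.sum_const, smul_eq_mul, Finset.card_powersetCard,
              Finset.card_univ, Fintype.card_fin]
    calc μ {ω : (ℕ → Fin m) × (ℕ → Fin m) |
          ∀ n, ((Finset.range n).image ω.1).card < k}
        ≤ μ {ω | (fun i : Fin n => ω.1 i) ∈ Bad} := measure_mono hsub
      _ = (Bad.card : ℝ≥0∞) * (1 / (m : ℝ≥0∞)) ^ n := measure_fstPattern hm μ hiid Bad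
      _ ≤ ((Nat.choose m (k - 1) * (k - 1) ^ n : ℕ) : ℝ≥0∞) * (1 / (m : ℝ≥0∞)) ^ n := by
          have := (Nat.cast_le (α := ℝ≥0∞)).mpr hcount
          exact mul_le_mul_left this _
      _ = ((Nat.choose m (k - 1) : NNReal) : ℝ≥0∞) *
            (((k - 1 : ℕ) : ℝ≥0∞) * (1 / (m : ℝ≥0∞))) ^ n := by
          rw [mul_pow]
          push_cast
          ring

end Measure

lemma exists_perm_image_s17 {S T : Finset (Fin m)} (h : S.card = T.card) :
    ∃ σ : Equiv.Perm (Fin m), S.image σ = T := by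
  classical
  have hcompl : Sᶜ.card = Tᶜ.card := by
    rw [Finset.card_compl, Finset.card_compl, h]
  let e₁ : {x // x ∈ S} ≃ {x // x ∈ T} := Finset.equivOfCardEq h
  let e₂ : {x : Fin m // ¬x ∈ S} ≃ {x : Fin m // ¬x ∈ T} :=
    ((Equiv.subtypeEquivRight fun x => (Finset.mem_compl (s := S)).symm).trans
      (Finset.equivOfCardEq hcompl)).trans
      (Equiv.subtypeEquivRight fun x => Finset.mem_compl (s := T))
  let σ : Equiv.Perm (Fin m) :=
    ((Equiv.sumCompl (· ∈ S)).symm.trans (e₁.sumCongr e₂)).trans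
      (Equiv.sumCompl (· ∈ T))
  refine ⟨σ, ?_⟩
  apply Finset.eq_of_subset_of_card_le
  · intro y hy
    obtain ⟨x, hx, rfl⟩ := Finset.mem_image.mp hy
    have h1 : (Equiv.sumCompl (· ∈ S)).symm x = Sum.inl ⟨x, hx⟩ :=
      Equiv.sumCompl_symm_apply_of_pos hx
    have : σ x = (e₁ ⟨x, hx⟩ : Fin m) := by
      simp only [σ, Equiv.trans_apply, h1, Equiv.sumCongr_apply, Sum.map_inl,
        Equiv.sumCompl_apply_inl]
    rw [this]
    exact (e₁ ⟨x, hx⟩).2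
  · rw [Finset.card_image_of_injective _ σ.injective, h]

lemma stopCond_comp {k n : ℕ} {S : Finset (Fin m)} (σ : Equiv.Perm (Fin m))
    (ω : ℕ → Fin m) : stopCond k n S ω ↔ stopCond k n (S.image σ) (σ ∘ ω) := by
  unfold stopCond
  have himg : ∀ j : ℕ, (Finset.range j).image (σ ∘ ω) = ((Finset.range j).image ω).image σ :=
    fun j => (Finset.image_image).symm
  constructor
  · rintro ⟨h1, h2⟩
    refine ⟨by rw [himg, h1], fun j hj => ?_⟩
    rw [himg, Finset.card_image_of_injective _ σ.injective]
    exact h2 j hj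
  · rintro ⟨h1, h2⟩
    rw [himg] at h1
    refine ⟨Finset.image_injective σ.injective h1, fun j hj => ?_⟩
    have := h2 j hj
    rwa [himg, Finset.card_image_of_injective _ σ.injective] at this

lemma patterns_perm (hm : 0 < m) {k n : ℕ} {S T : Finset (Fin m)}
    (σ : Equiv.Perm (Fin m)) (hST : S.image σ = T) :
    patterns hm k n T = (patterns hm k n S).image (fun f => σ ∘ f) := by
  classical
  have key : ∀ f : Fin n → Fin m,
      f ∈ patterns hm k n S ↔ (σ ∘ f) ∈ patterns hm k n T := by
    intro f
    simp only [patterns, Finset.mem_filter, Finset.mem_univ, true_and]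
    rw [stopCond_comp σ (extFn hm f), hST]
    apply stopCond_congr
    intro i hi
    simp [extFn, hi]
  ext g
  rw [Finset.mem_image]
  constructor
  · intro hg
    refine ⟨σ.symm ∘ g, ?_, ?_⟩
    · rw [key]
      have : σ ∘ (σ.symm ∘ g) = g := by
        funext i; simp
      rwa [this]
    · funext i; simp
  · rintro ⟨f, hf, rfl⟩
    exact (key f).mp hf

lemma pSet_perm (hm : 0 < m) {k : ℕ} {S T : Finset (Fin m)}
    (hS : S.card = k) (hT : T.card = k) : pSet hm k S = pSet hm k T := by
  obtain ⟨σ, hσ⟩ := exists_perm_image_s17 (hS.trans hT.symm)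
  unfold pSet
  refine tsum_congr fun n => ?_
  rw [patterns_perm hm σ hσ, Finset.card_image_of_injective]
  intro f g hfg
  funext i
  exact σ.injective (congrFun hfg i)

lemma measure_union_of_null {α : Type*} [MeasurableSpace α] {μ : Measure α}
    {s t : Set α} (ht : μ t = 0) : μ (s ∪ t) = μ s :=
  le_antisymm (le_trans (measure_union_le s t) (by rw [ht, add_zero]))
    (measure_mono Set.subset_union_left)

end LossyAux



/-- **Collision probability of the lossy mapping.** Let `1 ≤ k ≤ m` and let `μ` be the
product of two independent infinite products of the uniform probability measure on `Fin m`
(characterized on cylinder sets). Then the probability that the set of the first `k`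
pairwise-distinct values of the first sequence equals that of the second sequence is
exactly `1 / C(m,k)`. -/
theorem lossy_mapping_collision_probability {m k : ℕ} (hm : 1 ≤ m) (hk : 1 ≤ k)
    (hkm : k ≤ m)
    (μ : Measure ((ℕ → Fin m) × (ℕ → Fin m))) [IsProbabilityMeasure μ]
    (hiid : ∀ (s t : Finset ℕ) (f g : ℕ → Fin m),
      μ {ω | (∀ i ∈ s, ω.1 i = f i) ∧ (∀ j ∈ t, ω.2 j = g j)} =
        (1 / (m : ℝ≥0∞)) ^ s.card * (1 / (m : ℝ≥0∞)) ^ t.card) :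
    μ {ω | firstDistinct k ω.1 = firstDistinct k ω.2} = 1 / (Nat.choose m k : ℝ≥0∞) := by
  classical
  have hm' : 0 < m := hm
  have hC0 : (Nat.choose m k : ℝ≥0∞) ≠ 0 := by
    simp only [ne_eq, Nat.cast_eq_zero]
    exact (Nat.choose_pos hkm).ne'
  have hCtop : (Nat.choose m k : ℝ≥0∞) ≠ ∞ := ENNReal.natCast_ne_top _
  set Ssets := Finset.powersetCard k (Finset.univ : Finset (Fin m)) with hSsets
  have hmem : ∀ S : Finset (Fin m), S ∈ Ssets ↔ S.card = k := by
    intro S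
    rw [hSsets, Finset.mem_powersetCard]
    exact ⟨fun h => h.2, fun h => ⟨Finset.subset_univ S, h⟩⟩
  have hcardS : Ssets.card = Nat.choose m k := by
    rw [hSsets, Finset.card_powersetCard, Finset.card_univ, Fintype.card_fin]
  obtain ⟨S₀, -, -, hS₀⟩ := Finset.exists_subsuperset_card_eq (n := k)
    (Finset.empty_subset (Finset.univ : Finset (Fin m)))
    (by simp) (by simp only [Finset.card_univ, Fintype.card_fin]; omega)
  set p := LossyAux.pSet hm' k S₀ with hp_def
  have hps : ∀ S ∈ Ssets, LossyAux.pSet hm' k S = p :=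
    fun S hS => LossyAux.pSet_perm hm' ((hmem S).mp hS) hS₀
  set N := {ω : (ℕ → Fin m) × (ℕ → Fin m) |
    ∀ n, ((Finset.range n).image ω.1).card < k} with hN
  have hNnull : μ N = 0 := LossyAux.measure_never μ hm' hk hkm hiid
  -- the `pSet`s sum to 1
  have hdisj1 : (Ssets : Set (Finset (Fin m))).PairwiseDisjoint
      (fun S => {ω : (ℕ → Fin m) × (ℕ → Fin m) | firstDistinct k ω.1 = S}) := by
    intro S hS T hT hST
    rw [Function.onFun, Set.disjoint_left]
    rintro ω h1 h2
    rw [Set.mem_setOf_eq] at h1 h2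
    exact hST (h1.symm.trans h2)
  have hunion : (Set.univ : Set ((ℕ → Fin m) × (ℕ → Fin m))) =
      (⋃ S ∈ Ssets, {ω : (ℕ → Fin m) × (ℕ → Fin m) | firstDistinct k ω.1 = S}) ∪ N := by
    ext ω
    simp only [Set.mem_univ, true_iff, Set.mem_union, Set.mem_iUnion, Set.mem_setOf_eq, hN]
    by_cases hex : ∃ n, k ≤ ((Finset.range n).image ω.1).card
    · left
      exact ⟨firstDistinct k ω.1, (hmem _).mpr (LossyAux.card_firstDistinct hk hex), rfl⟩
    · right
      push_neg at hex
      exact hex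
  have hsum1 : ∑ S ∈ Ssets, LossyAux.pSet hm' k S = 1 := by
    have h1 : μ Set.univ = 1 := measure_univ
    rw [hunion, LossyAux.measure_union_of_null hNnull,
      measure_biUnion_finset hdisj1
        (fun S hS => LossyAux.measurableSet_singleEvent hm' hk ((hmem S).mp hS))] at h1
    rw [← h1]
    exact Finset.sum_congr rfl fun S hS =>
      (LossyAux.measure_singleEvent hm' μ hiid hk ((hmem S).mp hS)).symm
  have hCp : (Nat.choose m k : ℝ≥0∞) * p = 1 := by
    rw [← hsum1, Finset.sum_congr rfl hps, Finset.sum_const, nsmul_eq_mul, hcardS]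
  have hp : p = 1 / (Nat.choose m k : ℝ≥0∞) := by
    have h2 : p = (Nat.choose m k : ℝ≥0∞)⁻¹ * ((Nat.choose m k : ℝ≥0∞) * p) := by
      rw [← mul_assoc, ENNReal.inv_mul_cancel hC0 hCtop, one_mul]
    rw [hCp, mul_one, ← one_div] at h2
    exact h2
  -- decompose the collision event
  have hcoll : {ω : (ℕ → Fin m) × (ℕ → Fin m) | firstDistinct k ω.1 = firstDistinct k ω.2} =
      (⋃ S ∈ Ssets, {ω : (ℕ → Fin m) × (ℕ → Fin m) |
        firstDistinct k ω.1 = S ∧ firstDistinct k ω.2 = S}) ∪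
        (N ∩ {ω : (ℕ → Fin m) × (ℕ → Fin m) |
          ∀ n, ((Finset.range n).image ω.2).card < k}) := by
    ext ω
    simp only [Set.mem_setOf_eq, Set.mem_union, Set.mem_iUnion, Set.mem_inter_iff, hN]
    constructor
    · intro h
      by_cases hex1 : ∃ n, k ≤ ((Finset.range n).image ω.1).card
      · by_cases hex2 : ∃ n, k ≤ ((Finset.range n).image ω.2).card
        · left
          exact ⟨firstDistinct k ω.1,
            (hmem _).mpr (LossyAux.card_firstDistinct hk hex1), rfl, h.symm⟩
        · exfalso
          have h2 : firstDistinct k ω.2 = ∅ := by simp only [firstDistinct, dif_neg hex2]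
          have h3 := LossyAux.card_firstDistinct hk hex1
          rw [h, h2, Finset.card_empty] at h3
          omega
      · by_cases hex2 : ∃ n, k ≤ ((Finset.range n).image ω.2).card
        · exfalso
          have h2 : firstDistinct k ω.1 = ∅ := by simp only [firstDistinct, dif_neg hex1]
          have h3 := LossyAux.card_firstDistinct hk hex2
          rw [← h, h2, Finset.card_empty] at h3
          omega
        · right
          push_neg at hex1 hex2
          exact ⟨hex1, hex2⟩
    · rintro (⟨S, hSmem, h1, h2⟩ | ⟨h1, h2⟩)
      · rw [h1, h2]
      · have e1 : firstDistinct k ω.1 = ∅ := by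
          apply dif_neg
          push_neg
          exact h1
        have e2 : firstDistinct k ω.2 = ∅ := by
          apply dif_neg
          push_neg
          exact h2
        rw [e1, e2]
  have hZnull : μ (N ∩ {ω : (ℕ → Fin m) × (ℕ → Fin m) |
      ∀ n, ((Finset.range n).image ω.2).card < k}) = 0 :=
    le_antisymm (hNnull ▸ measure_mono Set.inter_subset_left) zero_le
  have hdisj2 : (Ssets : Set (Finset (Fin m))).PairwiseDisjoint
      (fun S => {ω : (ℕ → Fin m) × (ℕ → Fin m) |
        firstDistinct k ω.1 = S ∧ firstDistinct k ω.2 = S}) := by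
    intro S hS T hT hST
    rw [Function.onFun, Set.disjoint_left]
    rintro ω ⟨h1, -⟩ ⟨h2, -⟩
    exact hST (h1.symm.trans h2)
  rw [hcoll, LossyAux.measure_union_of_null hZnull,
    measure_biUnion_finset hdisj2
      (fun S hS => LossyAux.measurableSet_pairEvent hm' hk
        ((hmem S).mp hS) ((hmem S).mp hS))]
  have hterm : ∀ S ∈ Ssets, μ {ω : (ℕ → Fin m) × (ℕ → Fin m) |
      firstDistinct k ω.1 = S ∧ firstDistinct k ω.2 = S} = p * p := by
    intro S hS
    rw [LossyAux.measure_pairEvent hm' μ hiid hk ((hmem S).mp hS) ((hmem S).mp hS),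
      hps S hS]
  rw [Finset.sum_congr rfl hterm, Finset.sum_const, nsmul_eq_mul, hcardS,
    ← mul_assoc, hCp, one_mul, hp]
end
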